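/- Let p be an odd prime, let W ⊆ ℤ/pℤ with |W| = n, and let z ∈ ℤ/pℤ be nonzero. Then the number of functions f : (ℤ/pℤ) \ W → {0, 1} for which there is NO pair of elements u, v ∈ (ℤ/pℤ) \ W with f(u) = 1, f(v) = 0 and u − v = z is at most (3/4)^{(p−1)/2 − n} · 2^{p − n}. -/

import Mathlib

open Finset

private lemma count_aux
    (p q : ℕ) (hp : p.Prime) (hpq : p = 2*q+1)
    (W : Finset (ZMod p)) (n : ℕ) (hn : W.card = n) (z : ZMod p) (hz : z ≠ 0) :
    ∃ M : ℕ, q ≤ n + M ∧ n + 2*M ≤ p ∧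
      Nat.card {f : {x : ZMod p // x ∉ W} → Bool |
        ¬ ∃ u v : {x : ZMod p // x ∉ W},
          f u = true ∧ f v = false ∧ (u : ZMod p) - (v : ZMod p) = z}
        ≤ 3 ^ M * 2 ^ (p - (n + 2*M)) := by
  classical
  haveI : Fact p.Prime := ⟨hp⟩
  haveI : NeZero p := ⟨hp.pos.ne'⟩
  set e : ℕ → ZMod p := fun i => (i : ZMod p) * z with he
  have key : ∀ i i' : ℕ, i < p → i' < p → e i = e i' → i = i' := by
    intro i i' hi hi' h
    have h2 : ((i : ZMod p)) = (i' : ZMod p) := mul_right_cancel₀ hz h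
    have h3 := congrArg ZMod.val h2
    rwa [ZMod.val_cast_of_lt hi, ZMod.val_cast_of_lt hi'] at h3
  have hlt : ∀ j < q, 2*j < p ∧ 2*j+1 < p := by intro j hj; omega
  set J : Finset ℕ := (Finset.range q).filter
      (fun j => ¬(e (2*j) ∈ W ∨ e (2*j+1) ∈ W)) with hJ
  set M := J.card with hMdef
  -- q ≤ n + M
  have hcards := Finset.card_filter_add_card_filter_not
      (s := Finset.range q) (p := fun j => e (2*j) ∈ W ∨ e (2*j+1) ∈ W)
  have hK : ((Finset.range q).filter (fun j => e (2*j) ∈ W ∨ e (2*j+1) ∈ W)).card ≤ n := by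
    rw [← hn]
    apply Finset.card_le_card_of_injOn (fun j => if e (2*j) ∈ W then e (2*j) else e (2*j+1))
    · intro j hj
      simp only [Finset.coe_filter, Set.mem_setOf_eq] at hj
      by_cases h : e (2*j) ∈ W
      · simp [h]
      · simp [h]; tauto
    · intro j hj j' hj' hjj'
      simp only [Finset.coe_filter, Set.mem_setOf_eq, Finset.mem_range] at hj hj'
      by_contra hne
      have hj1 := (hlt j hj.1).1; have hj2 := (hlt j hj.1).2
      have hj1' := (hlt j' hj'.1).1; have hj2' := (hlt j' hj'.1).2
      by_cases h1 : e (2*j) ∈ W <;> by_cases h2 : e (2*j') ∈ W <;>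
        simp only [h1, h2, if_pos, if_neg, if_true, if_false] at hjj' <;>
        [exact absurd (key _ _ hj1 hj1' hjj') (by omega);
         exact absurd (key _ _ hj1 hj2' hjj') (by omega);
         exact absurd (key _ _ hj2 hj1' hjj') (by omega);
         exact absurd (key _ _ hj2 hj2' hjj') (by omega)]
  have hqnM : q ≤ n + M := by
    have hMeq : ((Finset.range q).filter
        (fun a => ¬(e (2*a) ∈ W ∨ e (2*a+1) ∈ W))).card = M := rfl
    have := Finset.card_range q
    omega
  -- the edge vertex set
  set E : Finset (ZMod p) := J.biUnion (fun j => {e (2*j), e (2*j+1)}) with hE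
  have hJmem : ∀ j ∈ J, j < q ∧ e (2*j) ∉ W ∧ e (2*j+1) ∉ W := by
    intro j hj
    simp only [hJ, Finset.mem_filter, Finset.mem_range, not_or] at hj
    tauto
  have hEcard : E.card = 2 * M := by
    rw [hE, Finset.card_biUnion]
    · rw [Finset.sum_congr rfl (g := fun _ => 2)]
      · simp [hMdef, mul_comm]
      · intro j hj
        obtain ⟨hjq, _, _⟩ := hJmem j hj
        rw [Finset.card_insert_of_notMem, Finset.card_singleton]
        simp only [Finset.mem_singleton]
        intro h
        exact absurd (key _ _ (hlt j hjq).1 (hlt j hjq).2 h) (by omega)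
    · intro j hj j' hj' hne
      obtain ⟨hjq, _, _⟩ := hJmem j hj
      obtain ⟨hjq', _, _⟩ := hJmem j' hj'
      simp only [Finset.disjoint_left, Finset.mem_insert, Finset.mem_singleton]
      rintro a (rfl | rfl) (h | h) <;>
        [exact absurd (key _ _ (hlt j hjq).1 (hlt j' hjq').1 h) (by omega);
         exact absurd (key _ _ (hlt j hjq).1 (hlt j' hjq').2 h) (by omega);
         exact absurd (key _ _ (hlt j hjq).2 (hlt j' hjq').1 h) (by omega);
         exact absurd (key _ _ (hlt j hjq).2 (hlt j' hjq').2 h) (by omega)]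
  have hWE : Disjoint W E := by
    rw [Finset.disjoint_right]
    intro a ha
    simp only [hE, Finset.mem_biUnion, Finset.mem_insert, Finset.mem_singleton] at ha
    obtain ⟨j, hj, (rfl | rfl)⟩ := ha
    · exact (hJmem j hj).2.1
    · exact (hJmem j hj).2.2
  have hWEcard : (W ∪ E).card = n + 2*M := by
    rw [Finset.card_union_of_disjoint hWE, hn, hEcard]
  have hn2Mp : n + 2*M ≤ p := by
    rw [← hWEcard]
    calc (W ∪ E).card ≤ Fintype.card (ZMod p) := Finset.card_le_univ _
    _ = p := ZMod.card p
  refine ⟨M, hqnM, hn2Mp, ?_⟩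
  -- the injection
  set X := {x : ZMod p // x ∉ W}
  set Bad : Set (X → Bool) := {f | ¬ ∃ u v : X,
      f u = true ∧ f v = false ∧ (u : ZMod p) - (v : ZMod p) = z} with hBad
  set Y := {y : ZMod p // y ∉ W ∪ E}
  set T := ((j : {j // j ∈ J}) → {v : Bool × Bool // v ≠ (false, true)}) × (Y → Bool) with hT
  have hsub : ∀ j ∈ J, e (2*j+1) - e (2*j) = z := by
    intro j hj
    simp only [he]
    push_cast
    ring
  have Φinj : ∃ Φ : Bad → T, Function.Injective Φ := by
    refine ⟨fun f => ⟨fun j => ⟨(f.1 ⟨e (2*j.1), (hJmem j.1 j.2).2.1⟩,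
        f.1 ⟨e (2*j.1+1), (hJmem j.1 j.2).2.2⟩), by
          intro hcon
          rw [Prod.mk.injEq] at hcon
          exact f.2 ⟨⟨e (2*j.1+1), (hJmem j.1 j.2).2.2⟩, ⟨e (2*j.1), (hJmem j.1 j.2).2.1⟩,
            hcon.2, hcon.1, hsub j.1 j.2⟩⟩,
        fun y => f.1 ⟨y.1, fun h => y.2 (Finset.mem_union_left _ h)⟩⟩, ?_⟩
    intro f g hfg
    rw [Prod.mk.injEq] at hfg
    apply Subtype.ext
    funext x
    by_cases hx : x.1 ∈ E
    · simp only [hE, Finset.mem_biUnion, Finset.mem_insert, Finset.mem_singleton] at hx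
      obtain ⟨j, hj, (hxa | hxb)⟩ := hx
      · have h1 := congrFun hfg.1 ⟨j, hj⟩
        rw [Subtype.mk.injEq, Prod.mk.injEq] at h1
        have hxeq : x = ⟨e (2*j), (hJmem j hj).2.1⟩ := Subtype.ext hxa
        rw [hxeq]; exact h1.1
      · have h1 := congrFun hfg.1 ⟨j, hj⟩
        rw [Subtype.mk.injEq, Prod.mk.injEq] at h1
        have hxeq : x = ⟨e (2*j+1), (hJmem j hj).2.2⟩ := Subtype.ext hxb
        rw [hxeq]; exact h1.2
    · have hy : x.1 ∉ W ∪ E := by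
        simp only [Finset.mem_union, not_or]; exact ⟨x.2, hx⟩
      have h2 := congrFun hfg.2 ⟨x.1, hy⟩
      simpa using h2
  obtain ⟨Φ, hΦ⟩ := Φinj
  have hcard : Nat.card Bad ≤ Nat.card T := Nat.card_le_card_of_injective Φ hΦ
  have hTcard : Nat.card T = 3 ^ M * 2 ^ (p - (n + 2*M)) := by
    rw [hT, Nat.card_prod, Nat.card_pi, Nat.card_fun]
    have h3 : Nat.card {v : Bool × Bool // v ≠ (false, true)} = 3 := by
      rw [Nat.card_eq_fintype_card]; decide
    have hYcard : Nat.card Y = p - (n + 2*M) := by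
      rw [Nat.card_eq_fintype_card]
      have : Fintype.card Y = (W ∪ E)ᶜ.card := by
        apply Fintype.card_of_subtype
        intro x; simp
      rw [this, Finset.card_compl, ZMod.card, hWEcard]
    rw [hYcard, Nat.card_eq_fintype_card (α := Bool)]
    simp only [h3, Finset.prod_const, Finset.card_univ, Fintype.card_coe]
    norm_num [hMdef]
  calc Nat.card Bad ≤ Nat.card T := hcard
  _ = 3 ^ M * 2 ^ (p - (n + 2*M)) := hTcard

theorem count_bad_colourings_le
    (p : ℕ) (hp : p.Prime) (hp2 : p ≠ 2)
    (W : Finset (ZMod p)) (n : ℕ) (hn : W.card = n) (z : ZMod p) (hz : z ≠ 0) :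
    (Nat.card {f : {x : ZMod p // x ∉ W} → Bool |
        ¬ ∃ u v : {x : ZMod p // x ∉ W},
          f u = true ∧ f v = false ∧ (u : ZMod p) - (v : ZMod p) = z} : ℝ) ≤
      ((3 : ℝ) / 4) ^ (((p : ℝ) - 1) / 2 - (n : ℝ)) *
        (2 : ℝ) ^ ((p : ℝ) - (n : ℝ)) := by
  obtain ⟨q, hq⟩ := hp.odd_of_ne_two hp2
  have hpq : p = 2*q+1 := by omega
  obtain ⟨M, hqnM, hn2Mp, hcount⟩ := count_aux p q hp hpq W n hn z hz
  have hnp : n ≤ p := le_trans (Nat.le_add_right n (2*M)) hn2Mp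
  calc (Nat.card {f : {x : ZMod p // x ∉ W} → Bool |
        ¬ ∃ u v : {x : ZMod p // x ∉ W},
          f u = true ∧ f v = false ∧ (u : ZMod p) - (v : ZMod p) = z} : ℝ)
      ≤ ((3 ^ M * 2 ^ (p - (n + 2*M)) : ℕ) : ℝ) := by exact_mod_cast hcount
    _ = ((3:ℝ)/4) ^ M * (2:ℝ) ^ (p - n : ℕ) := by
        push_cast
        have h2 : (2:ℝ) ^ (p - n : ℕ) = 2 ^ (p - (n + 2*M) : ℕ) * 4 ^ M := by
          rw [show (4:ℝ) = 2^2 by norm_num, ← pow_mul, ← pow_add]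
          congr 1
          clear hcount
          omega
        rw [div_pow, h2]
        field_simp
    _ ≤ ((3 : ℝ) / 4) ^ (((p : ℝ) - 1) / 2 - (n : ℝ)) * (2 : ℝ) ^ ((p : ℝ) - (n : ℝ)) := by
        have e2 : (2:ℝ) ^ (p - n : ℕ) = (2:ℝ) ^ ((p : ℝ) - (n : ℝ)) := by
          rw [← Real.rpow_natCast 2 (p - n)]
          congr 1
          push_cast [Nat.cast_sub hnp]
          ring
        have e3 : ((3:ℝ)/4) ^ M = ((3:ℝ)/4) ^ (M : ℝ) := (Real.rpow_natCast _ M).symm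
        rw [e2, e3]
        apply mul_le_mul_of_nonneg_right
        · apply Real.rpow_le_rpow_of_exponent_ge (by norm_num) (by norm_num)
          have : ((p:ℝ) - 1)/2 = q := by rw [hpq]; push_cast; ring
          rw [this]
          have : (q:ℝ) ≤ n + M := by exact_mod_cast hqnM
          linarith
        · positivity
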